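/- Let A be a ring and G a group acting on A by ring automorphisms, and let J and J' be G-prime ideals of A. If some prime two-sided ideal Q with (Q:G) = J' contains the intersection of all prime two-sided ideals P with (P:G) = J, then every prime two-sided ideal Q' with (Q':G) = J' contains that intersection. (Equivalently, the Zariski closure of each G-stratum of the prime spectrum of A is a union of G-strata.) -/
import Mathlib


open Pointwise

/-- A subset of a ring is a two-sided ideal: contains 0, closed under addition,
negation, and left/right multiplication by arbitrary ring elements. -/
def IsTwoSidedIdealSet {A : Type*} [Ring A] (I : Set A) : Prop :=
  (0 : A) ∈ I ∧ (∀ a ∈ I, ∀ b ∈ I, a + b ∈ I) ∧ (∀ a ∈ I, -a ∈ I) ∧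
    (∀ a ∈ I, ∀ r : A, r * a ∈ I) ∧ (∀ a ∈ I, ∀ r : A, a * r ∈ I)

/-- `MulSubset I J P` expresses that the product ideal `I·J` is contained in `P`
(for `P` closed under addition this is equivalent to the usual condition). -/
def MulSubset {A : Type*} [Ring A] (I J P : Set A) : Prop :=
  ∀ a ∈ I, ∀ b ∈ J, a * b ∈ P

/-- A two-sided ideal `P` is prime: proper, and `I₁I₂ ⊆ P` implies `I₁ ⊆ P` or `I₂ ⊆ P`
for all two-sided ideals `I₁, I₂`. -/
def IsPrimeIdealSet {A : Type*} [Ring A] (P : Set A) : Prop :=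
  IsTwoSidedIdealSet P ∧ P ≠ Set.univ ∧
    ∀ I J : Set A, IsTwoSidedIdealSet I → IsTwoSidedIdealSet J →
      MulSubset I J P → I ⊆ P ∨ J ⊆ P

/-- A two-sided ideal is `G`-stable if `g • I = I` for all `g ∈ G`. -/
def IsGStable (G : Type*) {A : Type*} [Group G] [Ring A] [MulSemiringAction G A]
    (I : Set A) : Prop :=
  ∀ g : G, g • I = I

/-- A `G`-prime ideal: a proper `G`-stable two-sided ideal `J` such that whenever
`I₁, I₂` are `G`-stable two-sided ideals with `I₁I₂ ⊆ J`, then `I₁ ⊆ J` or `I₂ ⊆ J`. -/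
def IsGPrimeIdealSet (G : Type*) {A : Type*} [Group G] [Ring A] [MulSemiringAction G A]
    (J : Set A) : Prop :=
  IsTwoSidedIdealSet J ∧ IsGStable G J ∧ J ≠ Set.univ ∧
    ∀ I₁ I₂ : Set A, IsTwoSidedIdealSet I₁ → IsGStable G I₁ →
      IsTwoSidedIdealSet I₂ → IsGStable G I₂ →
      MulSubset I₁ I₂ J → I₁ ⊆ J ∨ I₂ ⊆ J

/-- The `G`-stratum of the prime spectrum corresponding to a `G`-prime `J`:
all prime two-sided ideals `P` with `(P:G) = ⋂_{g∈G} g • P = J`. -/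
def GStratum (G : Type*) {A : Type*} [Group G] [Ring A] [MulSemiringAction G A]
    (J : Set A) : Set (Set A) :=
  {P : Set A | IsPrimeIdealSet P ∧ (⋂ g : G, g • P) = J}

/-- The closure of each `G`-stratum is a union of `G`-strata: if some prime `Q` with
`(Q:G) = J'` contains the intersection of the stratum of `J`, then every prime `Q'`
with `(Q':G) = J'` contains that intersection. -/

lemma smul_twoSidedAux {G A : Type*} [Group G] [Ring A] [MulSemiringAction G A]
    (g : G) {I : Set A} (hI : IsTwoSidedIdealSet I) : IsTwoSidedIdealSet (g • I) := by
  obtain ⟨h0, hadd, hneg, hl, hr⟩ := hI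
  refine ⟨?_, ?_, ?_, ?_, ?_⟩
  · rw [Set.mem_smul_set_iff_inv_smul_mem, smul_zero]; exact h0
  · intro a ha b hb
    rw [Set.mem_smul_set_iff_inv_smul_mem] at ha hb ⊢
    rw [smul_add]; exact hadd _ ha _ hb
  · intro a ha
    rw [Set.mem_smul_set_iff_inv_smul_mem] at ha ⊢
    rw [smul_neg]; exact hneg _ ha
  · intro a ha r
    rw [Set.mem_smul_set_iff_inv_smul_mem] at ha ⊢
    rw [smul_mul']; exact hl _ ha _
  · intro a ha r
    rw [Set.mem_smul_set_iff_inv_smul_mem] at ha ⊢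
    rw [smul_mul']; exact hr _ ha _

lemma smul_primeAux {G A : Type*} [Group G] [Ring A] [MulSemiringAction G A]
    (g : G) {P : Set A} (hP : IsPrimeIdealSet P) : IsPrimeIdealSet (g • P) := by
  obtain ⟨hI, hne, hprime⟩ := hP
  refine ⟨smul_twoSidedAux g hI, ?_, ?_⟩
  · intro hU
    apply hne
    ext a
    simp only [Set.mem_univ, iff_true]
    have : g • a ∈ g • P := hU ▸ Set.mem_univ _
    rwa [Set.smul_mem_smul_set_iff] at this
  · intro I₁ I₂ h1 h2 hmul
    have key : MulSubset (g⁻¹ • I₁) (g⁻¹ • I₂) P := by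
      intro a ha b hb
      rw [Set.mem_smul_set_iff_inv_smul_mem, inv_inv] at ha hb
      have := hmul _ ha _ hb
      rw [← smul_mul', Set.smul_mem_smul_set_iff] at this
      exact this
    rcases hprime _ _ (smul_twoSidedAux g⁻¹ h1) (smul_twoSidedAux g⁻¹ h2) key with hs | hs
    · left
      intro a ha
      rw [Set.mem_smul_set_iff_inv_smul_mem]
      exact hs (by rw [Set.mem_smul_set_iff_inv_smul_mem, inv_inv, smul_inv_smul]; exact ha)
    · right
      intro a ha
      rw [Set.mem_smul_set_iff_inv_smul_mem]
      exact hs (by rw [Set.mem_smul_set_iff_inv_smul_mem, inv_inv, smul_inv_smul]; exact ha)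

lemma stratum_smulAux {G A : Type*} [Group G] [Ring A] [MulSemiringAction G A]
    (J : Set A) (g : G) {P : Set A} (hP : P ∈ GStratum G J) : g • P ∈ GStratum G J := by
  obtain ⟨hp, hint⟩ := hP
  refine ⟨smul_primeAux g hp, ?_⟩
  rw [← hint]
  ext a
  simp only [Set.mem_iInter]
  constructor
  · intro ha k
    have := ha (k * g⁻¹)
    rwa [smul_smul, inv_mul_cancel_right] at this
  · intro ha k
    have := ha (k * g)
    rwa [smul_smul]

theorem closure_of_stratum_is_union_of_strata {G A : Type*} [Group G] [Ring A]
    [MulSemiringAction G A] (J J' : Set A)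
    (hJ : IsGPrimeIdealSet G J) (hJ' : IsGPrimeIdealSet G J')
    (h : ∃ Q ∈ GStratum G J', ⋂₀ (GStratum G J) ⊆ Q) :
    ∀ Q' ∈ GStratum G J', ⋂₀ (GStratum G J) ⊆ Q' := by
  obtain ⟨Q, ⟨hQp, hQG⟩, hSQ⟩ := h
  have hSJ' : ⋂₀ (GStratum G J) ⊆ J' := by
    rw [← hQG]
    intro a ha
    rw [Set.mem_iInter]
    intro g
    rw [Set.mem_smul_set_iff_inv_smul_mem]
    apply hSQ
    rw [Set.mem_sInter]
    intro P hP
    have h1 : a ∈ g • P := ha (g • P) (stratum_smulAux J g hP)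
    rwa [Set.mem_smul_set_iff_inv_smul_mem] at h1
  intro Q' hQ'
  obtain ⟨hQ'p, hQ'G⟩ := hQ'
  have hJQ' : J' ⊆ Q' := by
    rw [← hQ'G]
    intro a ha
    have := Set.mem_iInter.mp ha (1 : G)
    rwa [one_smul] at this
  exact hSJ'.trans hJQ'
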